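/- arXiv:2507.02085 — 2 statements merged into one kernel-verified Lean document; each statement's English description precedes it below -/
import Mathlib

section
/- Let T N : ℕ with 0 < T * N, and let γ be the standard Gaussian measure on the trajectory space X = Fin T → Fin N → EuclideanSpace ℝ (Fin 3), i.e., the product over all frames τ, nodes i, and coordinates d of the real Gaussian measure gaussianReal 0 1. Let P be the centering map (P x) τ i = x τ i - x̄ with x̄ = (1 / (T * N)) • ∑ τ, ∑ i, x τ i. Then the restricted Gaussian Measure.map P γ is invariant under simultaneous rotations: for every R ∈ Matrix.specialOrthogonalGroup (Fin 3) ℝ, Measure.map (fun x => fun τ i => R.mulVec (x τ i)) (Measure.map P γ) = Measure.map P γ. -/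
open MeasureTheory ProbabilityTheory Matrix

/-- The standard Gaussian measure on `EuclideanSpace ℝ (Fin 3)`: the product over the
three coordinates of the real standard Gaussian `gaussianReal 0 1`. -/
noncomputable def stdGaussianE3 : Measure (EuclideanSpace ℝ (Fin 3)) :=
  Measure.map (MeasurableEquiv.toLp 2 (Fin 3 → ℝ))
    (Measure.pi fun _ : Fin 3 => gaussianReal 0 1)

/-- The standard Gaussian measure on the trajectory space
`X = Fin T → Fin N → EuclideanSpace ℝ (Fin 3)`: the product over all frames, nodes, and
coordinates of `gaussianReal 0 1`. -/
noncomputable def stdGaussianTraj (T N : ℕ) :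
    Measure (Fin T → Fin N → EuclideanSpace ℝ (Fin 3)) :=
  Measure.pi fun _ : Fin T => Measure.pi fun _ : Fin N => stdGaussianE3

/-- The centering map `(P x) τ i = x τ i - x̄`, where
`x̄ = (1 / (T * N)) • ∑ τ, ∑ i, x τ i`. -/
noncomputable def centerProj {T N : ℕ}
    (x : Fin T → Fin N → EuclideanSpace ℝ (Fin 3)) :
    Fin T → Fin N → EuclideanSpace ℝ (Fin 3) :=
  fun τ i => x τ i - (1 / ((T : ℝ) * (N : ℝ))) • ∑ τ', ∑ i', x τ' i'

/-- Tonelli for products of functions of separate variables over a finite product measure. -/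
lemma lintegral_pi_prod : ∀ (n : ℕ) (μ : Fin n → Measure ℝ), (∀ i, SigmaFinite (μ i)) →
    ∀ (f : Fin n → ℝ → ENNReal), (∀ i, Measurable (f i)) →
    ∫⁻ x, ∏ i, f i (x i) ∂Measure.pi μ = ∏ i, ∫⁻ y, f i y ∂μ i := by
  intro n
  induction n with
  | zero =>
    intro μ _ f _
    simp [Measure.pi_of_empty]
  | succ n ih =>
    intro μ hσ f hf
    haveI := hσ
    have h := measurePreserving_piFinSuccAbove μ 0
    set g : ℝ × (Fin n → ℝ) → ENNReal :=
      fun p => f 0 p.1 * ∏ j, f ((0 : Fin (n + 1)).succAbove j) (p.2 j) with hgdef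
    have hprodmeas : Measurable fun y : Fin n → ℝ =>
        ∏ j, f ((0 : Fin (n + 1)).succAbove j) (y j) :=
      Finset.measurable_prod _ fun j _ => (hf _).comp (measurable_pi_apply j)
    have hg : Measurable g :=
      ((hf 0).comp measurable_fst).mul (hprodmeas.comp measurable_snd)
    have step1 : ∫⁻ x, ∏ i, f i (x i) ∂Measure.pi μ
        = ∫⁻ x, g (MeasurableEquiv.piFinSuccAbove (fun _ => ℝ) 0 x) ∂Measure.pi μ := by
      congr 1
      funext x
      rw [hgdef]
      simp only [MeasurableEquiv.piFinSuccAbove_apply]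
      exact Fin.prod_univ_succAbove (fun i => f i (x i)) 0
    rw [step1, h.lintegral_comp hg, lintegral_prod _ hg.aemeasurable]
    simp only [hgdef]
    calc ∫⁻ a, ∫⁻ b, f 0 a * ∏ j, f ((0 : Fin (n + 1)).succAbove j) (b j)
          ∂(Measure.pi fun j => μ ((0 : Fin (n + 1)).succAbove j)) ∂μ 0
        = ∫⁻ a, f 0 a * ∫⁻ b, ∏ j, f ((0 : Fin (n + 1)).succAbove j) (b j)
            ∂(Measure.pi fun j => μ ((0 : Fin (n + 1)).succAbove j)) ∂μ 0 := by
          congr 1; funext a; rw [lintegral_const_mul _ hprodmeas]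
      _ = (∫⁻ a, f 0 a ∂μ 0) * ∫⁻ b, ∏ j, f ((0 : Fin (n + 1)).succAbove j) (b j)
            ∂(Measure.pi fun j => μ ((0 : Fin (n + 1)).succAbove j)) := by
          rw [lintegral_mul_const _ (hf 0)]
      _ = (∫⁻ a, f 0 a ∂μ 0) * ∏ j, ∫⁻ y, f ((0 : Fin (n + 1)).succAbove j) y
            ∂μ ((0 : Fin (n + 1)).succAbove j) := by
          rw [ih _ (fun j => inferInstance) _ (fun j => hf _)]
      _ = ∏ i, ∫⁻ y, f i y ∂μ i := (Fin.prod_univ_succAbove (fun i => ∫⁻ y, f i y ∂μ i) 0).symm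

/-- The 3-dimensional product of standard Gaussians is Lebesgue measure with the
product-Gaussian density. -/
lemma gauss3_withDensity :
    (Measure.pi fun _ : Fin 3 => gaussianReal 0 1)
      = (volume : Measure (Fin 3 → ℝ)).withDensity fun x => ∏ i, gaussianPDF 0 1 (x i) := by
  refine Measure.pi_eq fun s hs => ?_
  have hmeas : Measurable fun x : Fin 3 → ℝ => ∏ i, gaussianPDF 0 1 (x i) :=
    Finset.measurable_prod _ fun i _ => (measurable_gaussianPDF 0 1).comp (measurable_pi_apply i)
  rw [withDensity_apply _ (MeasurableSet.univ_pi hs),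
    ← lintegral_indicator (MeasurableSet.univ_pi hs) _]
  have hind : ∀ x : Fin 3 → ℝ,
      (Set.univ.pi s).indicator (fun x => ∏ i, gaussianPDF 0 1 (x i)) x
        = ∏ i, (s i).indicator (gaussianPDF 0 1) (x i) := by
    intro x
    by_cases hx : x ∈ Set.univ.pi s
    · rw [Set.indicator_of_mem hx]
      exact Finset.prod_congr rfl fun i _ =>
        (Set.indicator_of_mem (hx i (Set.mem_univ i)) _).symm
    · rw [Set.indicator_of_notMem hx]
      rw [Set.mem_univ_pi] at hx
      push_neg at hx
      obtain ⟨i, hi⟩ := hx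
      exact (Finset.prod_eq_zero (Finset.mem_univ i) (Set.indicator_of_notMem hi _)).symm
  simp_rw [hind]
  rw [MeasureTheory.volume_pi,
    lintegral_pi_prod 3 _ (fun _ => inferInstance) _
      (fun i => (measurable_gaussianPDF 0 1).indicator (hs i))]
  exact Finset.prod_congr rfl fun i _ => by
    rw [lintegral_indicator (hs i) _, ← gaussianReal_apply 0 one_ne_zero]

/-- Pushforward of a `withDensity` measure under a measurable equivalence. -/
lemma map_withDensity_equiv {α β : Type*} [MeasurableSpace α] [MeasurableSpace β]
    (e : α ≃ᵐ β) (μ : Measure α) (g : β → ENNReal) (hg : Measurable g) :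
    Measure.map e (μ.withDensity fun a => g (e a)) = (Measure.map e μ).withDensity g := by
  ext s hs
  rw [Measure.map_apply e.measurable hs, withDensity_apply _ (e.measurable hs),
    withDensity_apply _ hs, Measure.restrict_map e.measurable hs,
    lintegral_map hg e.measurable]

/-- Rotation invariance of the standard Gaussian on `Fin 3 → ℝ`. -/
lemma map_mulVec_pi_gaussian (R : Matrix (Fin 3) (Fin 3) ℝ)
    (hO : Rᵀ * R = 1) (hdet : R.det = 1) :
    Measure.map (fun x : Fin 3 → ℝ => R.mulVec x)
        (Measure.pi fun _ : Fin 3 => gaussianReal 0 1)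
      = Measure.pi fun _ : Fin 3 => gaussianReal 0 1 := by
  have hdet' : R.det ≠ 0 := by rw [hdet]; exact one_ne_zero
  have hcont : ∀ M : Matrix (Fin 3) (Fin 3) ℝ, Continuous fun x : Fin 3 → ℝ => M.mulVec x := by
    intro M
    refine continuous_pi fun i => ?_
    simp only [Matrix.mulVec, dotProduct]
    exact continuous_finset_sum _ fun j _ => continuous_const.mul (continuous_apply j)
  set e : (Fin 3 → ℝ) ≃ᵐ (Fin 3 → ℝ) :=
    { toFun := fun x => R.mulVec x
      invFun := fun x => R⁻¹.mulVec x
      left_inv := fun x => by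
        show R⁻¹ *ᵥ (R *ᵥ x) = x
        rw [Matrix.mulVec_mulVec, Matrix.nonsing_inv_mul R (Ne.isUnit hdet'), Matrix.one_mulVec]
      right_inv := fun x => by
        show R *ᵥ (R⁻¹ *ᵥ x) = x
        rw [Matrix.mulVec_mulVec, Matrix.mul_nonsing_inv R (Ne.isUnit hdet'), Matrix.one_mulVec]
      measurable_toFun := (hcont R).measurable
      measurable_invFun := (hcont R⁻¹).measurable } with he
  have hecoe : ⇑e = fun x : Fin 3 → ℝ => R.mulVec x := rfl
  have hmeas : Measurable fun x : Fin 3 → ℝ => ∏ i, gaussianPDF 0 1 (x i) :=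
    Finset.measurable_prod _ fun i _ => (measurable_gaussianPDF 0 1).comp (measurable_pi_apply i)
  -- the density is rotation invariant
  have hprod : ∀ y : Fin 3 → ℝ,
      ∏ i, gaussianPDFReal 0 1 (y i)
        = (Real.sqrt (2 * Real.pi))⁻¹ ^ 3 * Real.exp ((-∑ i, (y i) ^ 2) / 2) := by
    intro y
    simp only [gaussianPDFReal, sub_zero, NNReal.coe_one, mul_one]
    rw [Finset.prod_mul_distrib, Finset.prod_const, ← Real.exp_sum]
    congr 1
    rw [neg_div, Finset.sum_div, ← Finset.sum_neg_distrib]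
    simp [neg_div]
  have hsum : ∀ x : Fin 3 → ℝ, ∑ i, (R.mulVec x i) ^ 2 = ∑ i, (x i) ^ 2 := by
    intro x
    have key : R.mulVec x ⬝ᵥ R.mulVec x = x ⬝ᵥ x := by
      rw [Matrix.dotProduct_mulVec, ← Matrix.mulVec_transpose, Matrix.mulVec_mulVec, hO,
        Matrix.one_mulVec]
    simpa [dotProduct, pow_two] using key
  have hF : ∀ x : Fin 3 → ℝ,
      (∏ i, gaussianPDF 0 1 (R.mulVec x i)) = ∏ i, gaussianPDF 0 1 (x i) := by
    intro x
    simp only [gaussianPDF]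
    rw [← ENNReal.ofReal_prod_of_nonneg
        (f := fun i => gaussianPDFReal 0 1 (R.mulVec x i))
        (fun i _ => gaussianPDFReal_nonneg 0 1 _),
      ← ENNReal.ofReal_prod_of_nonneg
        (f := fun i => gaussianPDFReal 0 1 (x i))
        (fun i _ => gaussianPDFReal_nonneg 0 1 _),
      hprod, hprod, hsum]
  have hvol : Measure.map (fun x : Fin 3 → ℝ => R.mulVec x) volume = volume := by
    have h := Real.map_matrix_volume_pi_eq_smul_volume_pi hdet'
    have hfun : ⇑(Matrix.toLin' R) = fun x : Fin 3 → ℝ => R.mulVec x :=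
      funext fun x => Matrix.toLin'_apply R x
    rw [hfun] at h
    rw [h, hdet]
    simp
  rw [gauss3_withDensity, ← hecoe]
  have h1 : (volume : Measure (Fin 3 → ℝ)).withDensity (fun x => ∏ i, gaussianPDF 0 1 (x i))
      = (volume : Measure (Fin 3 → ℝ)).withDensity
          (fun x => (fun y : Fin 3 → ℝ => ∏ i, gaussianPDF 0 1 (y i)) (e x)) :=
    congrArg _ (funext fun x => (hF x).symm)
  conv_lhs => rw [h1]
  rw [map_withDensity_equiv e volume _ hmeas, hecoe, hvol]

/-- Rotation invariance of the standard Gaussian on `EuclideanSpace ℝ (Fin 3)`. -/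
lemma measurePreserving_rotE (R : Matrix (Fin 3) (Fin 3) ℝ)
    (hO : Rᵀ * R = 1) (hdet : R.det = 1) :
    MeasurePreserving
      (fun v : EuclideanSpace ℝ (Fin 3) => (EuclideanSpace.equiv (Fin 3) ℝ).symm (R.mulVec v))
      stdGaussianE3 stdGaussianE3 := by
  have hcont : Continuous fun x : Fin 3 → ℝ => R.mulVec x := by
    refine continuous_pi fun i => ?_
    simp only [Matrix.mulVec, dotProduct]
    exact continuous_finset_sum _ fun j _ => continuous_const.mul (continuous_apply j)
  have hL : Measurable fun x : Fin 3 → ℝ => R.mulVec x := hcont.measurable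
  have hρ : Measurable
      (fun v : EuclideanSpace ℝ (Fin 3) => (EuclideanSpace.equiv (Fin 3) ℝ).symm (R.mulVec v)) :=
    ((MeasurableEquiv.toLp 2 (Fin 3 → ℝ)).measurable.comp hL).comp
      (MeasurableEquiv.toLp 2 (Fin 3 → ℝ)).symm.measurable
  refine ⟨hρ, ?_⟩
  rw [stdGaussianE3, Measure.map_map hρ (MeasurableEquiv.measurable _)]
  have hcomp : ((fun v : EuclideanSpace ℝ (Fin 3) =>
        (EuclideanSpace.equiv (Fin 3) ℝ).symm (R.mulVec v))
        ∘ ⇑(MeasurableEquiv.toLp 2 (Fin 3 → ℝ)))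
      = (⇑(MeasurableEquiv.toLp 2 (Fin 3 → ℝ))
        ∘ fun x : Fin 3 → ℝ => R.mulVec x) := rfl
  rw [hcomp, ← Measure.map_map (MeasurableEquiv.measurable _) hL,
    map_mulVec_pi_gaussian R hO hdet]

/-- The rotation as a linear map on `EuclideanSpace ℝ (Fin 3)`. -/
noncomputable def rotE (R : Matrix (Fin 3) (Fin 3) ℝ) :
    EuclideanSpace ℝ (Fin 3) →ₗ[ℝ] EuclideanSpace ℝ (Fin 3) :=
  ((EuclideanSpace.equiv (Fin 3) ℝ).symm.toLinearEquiv.toLinearMap.comp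
    R.mulVecLin).comp (EuclideanSpace.equiv (Fin 3) ℝ).toLinearEquiv.toLinearMap

lemma rotE_apply (R : Matrix (Fin 3) (Fin 3) ℝ) (v : EuclideanSpace ℝ (Fin 3)) :
    rotE R v = (EuclideanSpace.equiv (Fin 3) ℝ).symm (R.mulVec v) := rfl

/-- Rotation commutes with the centering projection. -/
lemma centerProj_comm (R : Matrix (Fin 3) (Fin 3) ℝ) {T N : ℕ}
    (x : Fin T → Fin N → EuclideanSpace ℝ (Fin 3)) :
    (fun τ i => rotE R (centerProj x τ i))
      = centerProj (fun τ i => rotE R (x τ i)) := by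
  funext τ i
  simp only [centerProj]
  rw [map_sub, _root_.map_smul, map_sum]
  congr 2
  exact Finset.sum_congr rfl fun τ' _ => map_sum (rotE R) _ _

/-- The restricted Gaussian `Measure.map P γ` (the standard Gaussian pushed onto the
translation-invariant subspace by the centering map `P`) is invariant under simultaneous
rotations of all node coordinates. -/
theorem stmt10 (T N : ℕ) (hTN : 0 < T * N) :
    ∀ R ∈ Matrix.specialOrthogonalGroup (Fin 3) ℝ,
      Measure.map
          (fun x : Fin T → Fin N → EuclideanSpace ℝ (Fin 3) =>
            fun τ i => (EuclideanSpace.equiv (Fin 3) ℝ).symm (R.mulVec (x τ i)))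
          (Measure.map centerProj (stdGaussianTraj T N))
        = Measure.map centerProj (stdGaussianTraj T N) := by
  intro R hR
  obtain ⟨hmem, hdet⟩ := Matrix.mem_specialOrthogonalGroup_iff.mp hR
  have hO : Rᵀ * R = 1 := by
    have h := (Matrix.mem_orthogonalGroup_iff' (n := Fin 3) (R := ℝ)).mp hmem
    have hstar : star R = Rᵀ := by
      ext i j
      simp [Matrix.star_apply, Matrix.transpose_apply]
    exact h
  haveI : IsProbabilityMeasure stdGaussianE3 := by
    rw [stdGaussianE3]
    exact Measure.isProbabilityMeasure_map (MeasurableEquiv.measurable _).aemeasurable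
  have hρ := measurePreserving_rotE R hO hdet
  have hmp : MeasurePreserving
      (fun x : Fin T → Fin N → EuclideanSpace ℝ (Fin 3) =>
        fun τ i => (EuclideanSpace.equiv (Fin 3) ℝ).symm (R.mulVec (x τ i)))
      (stdGaussianTraj T N) (stdGaussianTraj T N) := by
    rw [stdGaussianTraj]
    exact measurePreserving_pi _ _ fun τ => measurePreserving_pi _ _ fun i => hρ
  have hcm : Measurable (centerProj (T := T) (N := N)) := by
    refine measurable_pi_lambda _ fun τ => measurable_pi_lambda _ fun i => Measurable.sub ?_ ?_
    · exact (measurable_pi_apply i).comp (measurable_pi_apply τ)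
    · exact (Finset.measurable_sum _ (f := fun τ' (x : Fin T → Fin N → EuclideanSpace ℝ (Fin 3)) => ∑ i', x τ' i') fun τ' _ => Finset.measurable_sum _ (f := fun i' (x : Fin T → Fin N → EuclideanSpace ℝ (Fin 3)) => x τ' i') fun i' _ =>
        (measurable_pi_apply i').comp (measurable_pi_apply τ')).const_smul (1 / ((T : ℝ) * (N : ℝ)))
  have hcomm : ((fun x : Fin T → Fin N → EuclideanSpace ℝ (Fin 3) =>
        fun τ i => (EuclideanSpace.equiv (Fin 3) ℝ).symm (R.mulVec (x τ i))) ∘ centerProj)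
      = (centerProj ∘ fun x : Fin T → Fin N → EuclideanSpace ℝ (Fin 3) =>
        fun τ i => (EuclideanSpace.equiv (Fin 3) ℝ).symm (R.mulVec (x τ i))) := by
    funext x
    simp only [Function.comp_apply, ← rotE_apply]
    exact centerProj_comm R x
  rw [Measure.map_map hmp.measurable hcm, hcomm, ← Measure.map_map hcm hmp.measurable,
    hmp.map_eq]
end

section
/- Fix real numbers x_r and x₀, and let β : ℕ → ℝ with 0 ≤ β τ ≤ 1 for all τ. Define the forward kernels K_τ : ℝ → Measure ℝ by K_τ x = gaussianReal (x_r + Real.sqrt (1 - β τ) * (x - x_r)) (⟨β τ, _⟩), and define ᾱ : ℕ → ℝ by ᾱ n = ∏ τ in Finset.range n, (1 - β τ). Then for every n, the n-step forward marginal starting from the Dirac mass at x₀, obtained by successively binding Measure.dirac x₀ with K_0, K_1, …, K_{n−1}, equals gaussianReal (x_r + Real.sqrt (ᾱ n) * (x₀ - x_r)) (⟨1 - ᾱ n, _⟩). -/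
open MeasureTheory ProbabilityTheory
open scoped NNReal

open Real
open scoped ENNReal

lemma gauss_pdf_conv (m z : ℝ) {v w : ℝ≥0} (hv : v ≠ 0) (hw : w ≠ 0) :
    ∫ y, gaussianPDFReal m v y * gaussianPDFReal y w z
      = gaussianPDFReal m (v + w) z := by
  have hV : (0:ℝ) < v := lt_of_le_of_ne v.coe_nonneg (by exact_mod_cast hv.symm)
  have hW : (0:ℝ) < w := lt_of_le_of_ne w.coe_nonneg (by exact_mod_cast hw.symm)
  set V : ℝ := (v : ℝ) with hVdef
  set W : ℝ := (w : ℝ) with hWdef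
  have hVW : (0:ℝ) < V + W := by positivity
  set S : ℝ := V * W / (V + W) with hS
  have hSpos : (0:ℝ) < S := by positivity
  set μs : ℝ := (W * m + V * z) / (V + W) with hμs
  have key : ∀ y : ℝ, gaussianPDFReal m v y * gaussianPDFReal y w z
      = ((√(2*π*V))⁻¹ * (√(2*π*W))⁻¹ * rexp (-(z - m)^2 / (2*(V+W))))
        * rexp (-(y - μs)^2 / (2*S)) := by
    intro y
    have hexp : -(y - m)^2 / (2*V) + -(z - y)^2 / (2*W)
        = -(z - m)^2 / (2*(V+W)) + -(y - μs)^2 / (2*S) := by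
      rw [hμs, hS]
      field_simp
      ring
    simp only [gaussianPDFReal]
    rw [mul_mul_mul_comm, ← Real.exp_add, hexp, Real.exp_add]
    ring
  have hint : ∫ y : ℝ, rexp (-(y - μs)^2 / (2*S)) = √(2*π*S) := by
    have h1 : ∫ y : ℝ, rexp (-(y - μs)^2 / (2*S))
        = ∫ y : ℝ, rexp (-(2*S)⁻¹ * y^2) := by
      rw [← integral_sub_right_eq_self (fun y => rexp (-(2*S)⁻¹ * y^2)) μs]
      congr 1
      ext y
      congr 1
      field_simp
    rw [h1, integral_gaussian]
    field_simp
  have hconst : (√(2*π*V))⁻¹ * (√(2*π*W))⁻¹ * √(2*π*S) = (√(2*π*(V+W)))⁻¹ := by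
    have h1 : √(2*π*V) * √(2*π*W) = √(2*π*(V+W)) * √(2*π*S) := by
      rw [← Real.sqrt_mul (by positivity), ← Real.sqrt_mul (by positivity)]
      congr 1
      rw [hS]
      field_simp
    have hA : (0:ℝ) < √(2*π*V) := Real.sqrt_pos.2 (by positivity)
    have hB : (0:ℝ) < √(2*π*W) := Real.sqrt_pos.2 (by positivity)
    have hC : (0:ℝ) < √(2*π*(V+W)) := Real.sqrt_pos.2 (by positivity)
    have hD : (0:ℝ) < √(2*π*S) := Real.sqrt_pos.2 (by positivity)
    have h2 : (√(2*π*V))⁻¹ * (√(2*π*W))⁻¹ = (√(2*π*(V+W)) * √(2*π*S))⁻¹ := by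
      rw [← mul_inv, h1]
    rw [h2, mul_inv, mul_assoc, inv_mul_cancel₀ hD.ne', mul_one]
  calc ∫ y, gaussianPDFReal m v y * gaussianPDFReal y w z
      = ∫ y, ((√(2*π*V))⁻¹ * (√(2*π*W))⁻¹ * rexp (-(z - m)^2 / (2*(V+W))))
          * rexp (-(y - μs)^2 / (2*S)) := by simp_rw [key]
    _ = ((√(2*π*V))⁻¹ * (√(2*π*W))⁻¹ * rexp (-(z - m)^2 / (2*(V+W))))
          * ∫ y, rexp (-(y - μs)^2 / (2*S)) := integral_const_mul _ _
    _ = gaussianPDFReal m (v + w) z := by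
          rw [hint]
          simp only [gaussianPDFReal, NNReal.coe_add]
          rw [← hVdef, ← hWdef]
          rw [show (√(2*π*V))⁻¹ * (√(2*π*W))⁻¹ * rexp (-(z - m)^2 / (2*(V+W))) * √(2*π*S)
              = ((√(2*π*V))⁻¹ * (√(2*π*W))⁻¹ * √(2*π*S)) * rexp (-(z - m)^2 / (2*(V+W))) by ring,
            hconst]

lemma measurable_gaussPDF_pair (w : ℝ≥0) :
    Measurable (fun p : ℝ × ℝ => gaussianPDF p.1 w p.2) := by
  simp only [gaussianPDF, gaussianPDFReal]
  exact ((((measurable_snd.sub measurable_fst).pow_const 2).neg.div_const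
    _).exp.const_mul _).ennreal_ofReal

lemma measurable_gauss_kernel (w : ℝ≥0) : Measurable (fun y : ℝ => gaussianReal y w) := by
  by_cases hw : w = 0
  · simpa [hw] using Measure.measurable_dirac
  · refine Measure.measurable_of_measurable_coe _ fun s hs => ?_
    simp_rw [gaussianReal_apply _ hw s]
    exact Measurable.lintegral_prod_right (measurable_gaussPDF_pair w)

lemma gauss_pdf_conv_lintegral (m z : ℝ) {v w : ℝ≥0} (hv : v ≠ 0) (hw : w ≠ 0) :
    ∫⁻ y, gaussianPDF m v y * gaussianPDF y w z = gaussianPDF m (v + w) z := by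
  have hW : (0:ℝ) < w := lt_of_le_of_ne w.coe_nonneg (by exact_mod_cast hw.symm)
  have hmz : Measurable fun y : ℝ => gaussianPDFReal y w z := by
    simp only [gaussianPDFReal]
    exact (((measurable_const.sub measurable_id).pow_const 2).neg.div_const
      _).exp.const_mul _
  have hbd : ∀ y : ℝ, ‖gaussianPDFReal y w z‖ ≤ (√(2*π*(w:ℝ)))⁻¹ := by
    intro y
    rw [Real.norm_eq_abs, abs_of_nonneg (gaussianPDFReal_nonneg _ _ _)]
    simp only [gaussianPDFReal]
    have h1 : rexp (-(z - y)^2 / (2*(w:ℝ))) ≤ 1 := by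
      rw [Real.exp_le_one_iff]
      apply div_nonpos_of_nonpos_of_nonneg
      · simp [sq_nonneg]
      · positivity
    calc (√(2*π*(w:ℝ)))⁻¹ * rexp (-(z - y)^2 / (2*(w:ℝ)))
        ≤ (√(2*π*(w:ℝ)))⁻¹ * 1 := by
          apply mul_le_mul_of_nonneg_left h1 (by positivity)
      _ = (√(2*π*(w:ℝ)))⁻¹ := mul_one _
  have hint : Integrable (fun y => gaussianPDFReal m v y * gaussianPDFReal y w z) := by
    simp_rw [mul_comm (gaussianPDFReal m v _)]
    exact Integrable.bdd_mul (integrable_gaussianPDFReal m v)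
      hmz.aestronglyMeasurable (ae_of_all _ hbd)
  calc ∫⁻ y, gaussianPDF m v y * gaussianPDF y w z
      = ∫⁻ y, ENNReal.ofReal (gaussianPDFReal m v y * gaussianPDFReal y w z) := by
        simp_rw [gaussianPDF, ← ENNReal.ofReal_mul (gaussianPDFReal_nonneg _ _ _)]
    _ = ENNReal.ofReal (∫ y, gaussianPDFReal m v y * gaussianPDFReal y w z) :=
        (ofReal_integral_eq_lintegral_ofReal hint (ae_of_all _ fun y =>
          mul_nonneg (gaussianPDFReal_nonneg _ _ _) (gaussianPDFReal_nonneg _ _ _))).symm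
    _ = gaussianPDF m (v + w) z := by rw [gauss_pdf_conv m z hv hw]; rfl

lemma gauss_bind (m : ℝ) (v w : ℝ≥0) :
    (gaussianReal m v).bind (fun y => gaussianReal y w) = gaussianReal m (v + w) := by
  by_cases hw : w = 0
  · simp only [hw, gaussianReal_zero_var, add_zero, Measure.bind_dirac]
  by_cases hv : v = 0
  · rw [hv, gaussianReal_zero_var, Measure.dirac_bind (measurable_gauss_kernel w), zero_add]
  · have hvw : v + w ≠ 0 := by simp [add_eq_zero, hv]
    ext s hs
    rw [Measure.bind_apply hs (measurable_gauss_kernel w).aemeasurable, gaussianReal_apply m hvw s]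
    have hmeasg : Measurable fun y : ℝ => ∫⁻ z in s, gaussianPDF y w z :=
      Measurable.lintegral_prod_right (measurable_gaussPDF_pair w)
    calc ∫⁻ y, gaussianReal y w s ∂gaussianReal m v
        = ∫⁻ y, (∫⁻ z in s, gaussianPDF y w z) ∂gaussianReal m v := by
          simp_rw [gaussianReal_apply _ hw s]
      _ = ∫⁻ y, gaussianPDF m v y * ∫⁻ z in s, gaussianPDF y w z := by
          rw [gaussianReal_of_var_ne_zero _ hv,
            lintegral_withDensity_eq_lintegral_mul _ (measurable_gaussianPDF _ _) hmeasg]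
          simp [Pi.mul_apply]
      _ = ∫⁻ y, ∫⁻ z in s, gaussianPDF m v y * gaussianPDF y w z := by
          congr 1; ext y
          rw [lintegral_const_mul _ (measurable_gaussianPDF y w)]
      _ = ∫⁻ z in s, ∫⁻ y, gaussianPDF m v y * gaussianPDF y w z :=
          lintegral_lintegral_swap
            (((measurable_gaussianPDF m v).comp measurable_fst).mul
              (measurable_gaussPDF_pair w)).aemeasurable
      _ = ∫⁻ z in s, gaussianPDF m (v + w) z := by
          congr 1; ext z
          exact gauss_pdf_conv_lintegral m z hv hw

lemma gauss_bind_affine (m a c : ℝ) (v w : ℝ≥0) :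
    (gaussianReal m v).bind (fun x => gaussianReal (a + c * x) w)
      = gaussianReal (a + c * m) (⟨c^2, sq_nonneg c⟩ * v + w) := by
  have hf : Measurable fun x : ℝ => a + c * x :=
    measurable_const.add (measurable_id.const_mul c)
  have hmap : (gaussianReal m v).map (fun x => a + c * x)
      = gaussianReal (a + c * m) (⟨c^2, sq_nonneg c⟩ * v) := by
    have hcomp : (fun x : ℝ => a + c * x) = (fun y : ℝ => y + a) ∘ (fun x : ℝ => c * x) := by
      ext x; simp [add_comm]
    rw [hcomp, ← Measure.map_map (measurable_add_const a) (measurable_const_mul c),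
      gaussianReal_map_const_mul c, gaussianReal_map_add_const a, add_comm]
    rfl
  have h1 : (gaussianReal m v).bind (fun x => gaussianReal (a + c * x) w)
      = ((gaussianReal m v).map (fun x => a + c * x)).bind (fun y => gaussianReal y w) := by
    ext s hs
    rw [Measure.bind_apply hs (show Measurable fun x : ℝ => gaussianReal (a + c * x) w from
        (measurable_gauss_kernel w).comp hf).aemeasurable,
      Measure.bind_apply hs (measurable_gauss_kernel w).aemeasurable,
      lintegral_map (show Measurable fun y : ℝ => (gaussianReal y w) s from
        (Measure.measurable_coe hs).comp (measurable_gauss_kernel w)) hf]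
  rw [h1, hmap, gauss_bind]

/-- The `n`-step marginal obtained by successively binding `μ` with the kernels
`K 0, K 1, …, K (n-1)`. -/
noncomputable def iterBind {α : Type*} [MeasurableSpace α] (μ : Measure α)
    (K : ℕ → α → Measure α) : ℕ → Measure α
  | 0 => μ
  | n + 1 => (iterBind μ K n).bind (K n)

/-- Closed form of the modified forward diffusion process
`q(x_τ | x_{τ-1}) = N(x_r + √(1 - β_τ) (x_{τ-1} - x_r), β_τ)`: the `n`-step forward
marginal started at the Dirac mass at `x₀` is
`N(x_r + √(ᾱ_n) (x₀ - x_r), 1 - ᾱ_n)`, where `ᾱ_n = ∏_{τ < n} (1 - β_τ)`. -/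
theorem stmt15 (x_r x₀ : ℝ) (β : ℕ → ℝ) (hβ : ∀ τ, 0 ≤ β τ ∧ β τ ≤ 1)
    (K : ℕ → ℝ → Measure ℝ)
    (hK : ∀ τ x, K τ x
      = gaussianReal (x_r + Real.sqrt (1 - β τ) * (x - x_r)) ⟨β τ, (hβ τ).1⟩) :
    ∀ n, iterBind (Measure.dirac x₀) K n
      = gaussianReal
          (x_r + Real.sqrt (∏ τ ∈ Finset.range n, (1 - β τ)) * (x₀ - x_r))
          (1 - ∏ τ ∈ Finset.range n, (1 - β τ)).toNNReal := by
  intro n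
  induction n with
  | zero => simp [iterBind]
  | succ n ih =>
    have hα0 : 0 ≤ ∏ τ ∈ Finset.range n, (1 - β τ) :=
      Finset.prod_nonneg fun τ _ => by linarith [(hβ τ).2]
    have hα1 : ∏ τ ∈ Finset.range n, (1 - β τ) ≤ 1 :=
      Finset.prod_le_one (fun τ _ => by linarith [(hβ τ).2]) (fun τ _ => by linarith [(hβ τ).1])
    have hβn0 := (hβ n).1
    have hβn1 := (hβ n).2
    have hKn : K n = fun x => gaussianReal
        ((x_r - Real.sqrt (1 - β n) * x_r) + Real.sqrt (1 - β n) * x) ⟨β n, (hβ n).1⟩ := by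
      funext x
      rw [hK n x]
      congr 1
      ring
    show (iterBind (Measure.dirac x₀) K n).bind (K n) = _
    rw [ih, hKn]
    erw [gauss_bind_affine]
    congr 1
    · rw [Finset.prod_range_succ, mul_comm (∏ τ ∈ Finset.range n, (1 - β τ)),
        Real.sqrt_mul (by linarith : (0:ℝ) ≤ 1 - β n)]
      ring
    · apply NNReal.coe_injective
      change ((NNReal.mk (√(1 - β n) ^ 2) (sq_nonneg _) * (1 - ∏ τ ∈ Finset.range n, (1 - β τ)).toNNReal
        + NNReal.mk (β n) (hβ n).1 : ℝ≥0) : ℝ) = _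
      push_cast
      rw [Finset.prod_range_succ,
        Real.coe_toNNReal _ (by linarith),
        Real.coe_toNNReal _ (by nlinarith),
        Real.sq_sqrt (by linarith : (0:ℝ) ≤ 1 - β n)]
      ring
end
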